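/- For every nonzero φ ∈ W and every z ∈ supp(φ), there exists a minimal nonempty support C of an element of W such that z ∈ C ⊆ supp(φ). -/

import Mathlib

open Function

/-- The submodule of functions with support contained in `S`. -/
def suppLE (K : Type*) {E : Type*} [Field K] (S : Set E) : Submodule K (E → K) where
  carrier := {f | Function.support f ⊆ S}
  add_mem' {a b} ha hb := (Function.support_add a b).trans (Set.union_subset ha hb)
  zero_mem' := by simp
  smul_mem' c f hf := (Function.support_const_smul_subset c f).trans hf

lemma mem_suppLE {K E : Type*} [Field K] {S : Set E} {f : E → K} :
    f ∈ suppLE K S ↔ Function.support f ⊆ S := ⟨fun h => h, fun h => h⟩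

/-- For every nonzero φ ∈ W and every z ∈ supp φ there is a
minimal nonempty support C of an element of W with z ∈ C ⊆ supp φ. -/
theorem stmt4 {K E : Type*} [Field K] (W : Submodule K (E → K))
    (hW : W ≠ ⊥) (hfin : FiniteDimensional K W)
    (φ : E → K) (hφW : φ ∈ W) (hφ : φ ≠ 0)
    (z : E) (hz : z ∈ Function.support φ) :
    ∃ C : Set E,
      (∃ w ∈ W, w ≠ 0 ∧ Function.support w = C ∧
        ∀ w' ∈ W, w' ≠ 0 → Function.support w' ⊆ C → Function.support w' = C) ∧
      z ∈ C ∧ C ⊆ Function.support φ := by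
  set U : Set E → Submodule K (E → K) := fun S => W ⊓ suppLE K S with hU
  have hUfd : ∀ S : Set E, FiniteDimensional K (U S) := fun S =>
    Submodule.finiteDimensional_of_le (inf_le_left : U S ≤ W)
  suffices H : ∀ n (φ : E → K), φ ∈ W → φ ≠ 0 →
      ∀ z ∈ Function.support φ,
      Module.finrank K (U (Function.support φ)) ≤ n →
      ∃ C : Set E,
        (∃ w ∈ W, w ≠ 0 ∧ Function.support w = C ∧
          ∀ w' ∈ W, w' ≠ 0 → Function.support w' ⊆ C → Function.support w' = C) ∧
        z ∈ C ∧ C ⊆ Function.support φ by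
    exact H _ φ hφW hφ z hz le_rfl
  intro n
  induction n using Nat.strong_induction_on with
  | _ n ih =>
    intro φ hφW hφ z hz hn
    by_cases hmin : ∀ w' ∈ W, w' ≠ 0 → Function.support w' ⊆ Function.support φ →
        Function.support w' = Function.support φ
    · exact ⟨Function.support φ, ⟨φ, hφW, hφ, rfl, hmin⟩, hz, subset_rfl⟩
    · push_neg at hmin
      obtain ⟨w, hwW, hw0, hws, hwne⟩ := hmin
      -- strict submodule descent helper
      have key : ∀ ψ : E → K, ψ ∈ W → ψ ≠ 0 →
          Function.support ψ ⊆ Function.support φ →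
          Function.support ψ ≠ Function.support φ →
          ∀ z' ∈ Function.support ψ,
          ∃ C : Set E,
            (∃ w ∈ W, w ≠ 0 ∧ Function.support w = C ∧
              ∀ w' ∈ W, w' ≠ 0 → Function.support w' ⊆ C → Function.support w' = C) ∧
            z' ∈ C ∧ C ⊆ Function.support φ := by
        intro ψ hψW hψ0 hψs hψne z' hz'
        have hlt : U (Function.support ψ) < U (Function.support φ) := by
          refine lt_of_le_of_ne (inf_le_inf_left _ ?_) ?_
          · exact fun f hf => mem_suppLE.mpr ((mem_suppLE.mp hf).trans hψs)
          · intro hEq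
            have hφmem : φ ∈ U (Function.support φ) := ⟨hφW, mem_suppLE.mpr subset_rfl⟩
            rw [← hEq] at hφmem
            exact hψne (Set.Subset.antisymm hψs (mem_suppLE.mp hφmem.2))
        have hrank : Module.finrank K (U (Function.support ψ)) <
            Module.finrank K (U (Function.support φ)) := by
          haveI := hUfd (Function.support φ)
          exact Submodule.finrank_lt_finrank_of_lt hlt
        obtain ⟨C, hC, hz'C, hCs⟩ :=
          ih (Module.finrank K (U (Function.support ψ)))
            (lt_of_lt_of_le hrank hn) ψ hψW hψ0 z' hz' le_rfl
        exact ⟨C, hC, hz'C, hCs.trans hψs⟩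
      by_cases hzw : z ∈ Function.support w
      · exact key w hwW hw0 hws hwne z hzw
      · -- z ∉ supp w; pick y ∈ supp w, subtract to kill y
        obtain ⟨y, hy⟩ : ∃ y, y ∈ Function.support w := by
          rcases Function.ne_iff.mp hw0 with ⟨y, hy⟩
          exact ⟨y, hy⟩
        set c : K := φ y / w y with hc
        set ψ : E → K := φ - c • w with hψdef
        have hψW : ψ ∈ W := W.sub_mem hφW (W.smul_mem c hwW)
        have hψy : ψ y = 0 := by
          have hwy : w y ≠ 0 := hy
          simp only [hψdef, Pi.sub_apply, Pi.smul_apply, smul_eq_mul, hc]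
          rw [div_mul_eq_mul_div, mul_div_assoc, div_self hwy, mul_one, sub_self]
        have hψz : ψ z = φ z := by
          have : w z = 0 := Function.notMem_support.mp hzw
          simp [hψdef, this]
        have hψ0 : ψ ≠ 0 := by
          intro h
          rw [h] at hψz
          exact hz (by simpa using hψz.symm)
        have hzψ : z ∈ Function.support ψ := by
          rw [Function.mem_support, hψz]; exact hz
        have hψs : Function.support ψ ⊆ Function.support φ := by
          refine (Function.support_sub φ (c • w)).trans (Set.union_subset subset_rfl ?_)
          exact (Function.support_const_smul_subset c w).trans hws
        have hψne : Function.support ψ ≠ Function.support φ := by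
          intro hEq
          have : y ∈ Function.support ψ := hEq ▸ hws hy
          exact this hψy
        exact key ψ hψW hψ0 hψs hψne z hzψ
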